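/- Let 𝒢 = (V, ℰ) be a temporal graph, x a timestamp, and v ∈ V. Then the vertex k-core time σ_x(v,𝒢) equals the k-th smallest element of the multiset {σ_x(u,v,𝒢) : u adjacent to v in the detemporalized graph of 𝒢}, with the convention that this value is ∞ (in ℕ ∪ {∞}) when fewer than k elements of this multiset are finite. -/

import Mathlib

open scoped Classical

noncomputable section

/-- A temporal graph on a vertex type `V`: a finite set of temporal edges
`(u, v, t)` with `u ≠ v`, symmetric in the two endpoints. -/
structure TemporalGraph (V : Type*) where
  E : Finset (V × V × ℕ)
  ne : ∀ e ∈ E, e.1 ≠ e.2.1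
  symm : ∀ u v t, (u, v, t) ∈ E → (v, u, t) ∈ E

variable {V : Type*}

/-- The detemporalized (projected) simple graph of `G` over the interval `[ts, te]`. -/
def detemp (G : TemporalGraph V) (ts te : ℕ) : SimpleGraph V where
  Adj u v := ∃ t, ts ≤ t ∧ t ≤ te ∧ (u, v, t) ∈ G.E
  symm := ⟨fun u v ⟨t, h1, h2, h3⟩ => ⟨t, h1, h2, G.symm u v t h3⟩⟩
  loopless := ⟨fun u ⟨_, _, _, h3⟩ => (G.ne _ h3) rfl⟩

/-- The detemporalized simple graph of `G` over all timestamps. -/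
def detempAll (G : TemporalGraph V) : SimpleGraph V where
  Adj u v := ∃ t, (u, v, t) ∈ G.E
  symm := ⟨fun u v ⟨t, h3⟩ => ⟨t, G.symm u v t h3⟩⟩
  loopless := ⟨fun u ⟨_, h3⟩ => (G.ne _ h3) rfl⟩

/-- `S` is `k`-dense in the simple graph `G` if every vertex of `S` has at
least `k` neighbors inside `S`. -/
def kDense (k : ℕ) (G : SimpleGraph V) (S : Set V) : Prop :=
  ∀ v ∈ S, k ≤ {u | u ∈ S ∧ G.Adj v u}.ncard

/-- `C_k(G)`: the union of all `k`-dense sets of `G`. -/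
def coreSet (k : ℕ) (G : SimpleGraph V) : Set V :=
  ⋃₀ {S | kDense k G S}

/-- The projected temporal edge set of `G` over `[ts, te]`. -/
def projE (G : TemporalGraph V) (ts te : ℕ) : Finset (V × V × ℕ) :=
  G.E.filter fun e => ts ≤ e.2.2 ∧ e.2.2 ≤ te

/-- The vertex set of the temporal `k`-core of `G` over `[ts, te]`. -/
def tcoreV (k : ℕ) (G : TemporalGraph V) (ts te : ℕ) : Set V :=
  coreSet k (detemp G ts te)

/-- The temporal edge set of the temporal `k`-core of `G` over `[ts, te]`. -/
def tcoreE (k : ℕ) (G : TemporalGraph V) (ts te : ℕ) : Finset (V × V × ℕ) :=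
  (projE G ts te).filter fun e => e.1 ∈ tcoreV k G ts te ∧ e.2.1 ∈ tcoreV k G ts te

/-- The `k`-core time `σ_x(v, G)` of a vertex `v` w.r.t. start timestamp `x`,
in `ℕ∞` (it is `⊤` if no suitable timestamp exists). -/
def coreTime (k : ℕ) (G : TemporalGraph V) (x : ℕ) (v : V) : ℕ∞ :=
  sInf ((fun t : ℕ => (t : ℕ∞)) '' {t | x ≤ t ∧ v ∈ tcoreV k G x t})

/-- The `k`-core time `σ_x(u, v, G)` of a pair `(u, v)` w.r.t. start timestamp `x`. -/
def edgeCoreTime (k : ℕ) (G : TemporalGraph V) (x : ℕ) (u v : V) : ℕ∞ :=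
  sInf ((fun t : ℕ => (t : ℕ∞)) ''
    {t | x ≤ t ∧ u ∈ tcoreV k G x t ∧ v ∈ tcoreV k G x t ∧ (detemp G x t).Adj u v})

/-- The support time `Sup_x(u, v, G)`: the minimum timestamp `t ≥ x` with `(u, v, t) ∈ ℰ`. -/
def supTime (G : TemporalGraph V) (x : ℕ) (u v : V) : ℕ∞ :=
  sInf ((fun t : ℕ => (t : ℕ∞)) '' {t | x ≤ t ∧ (u, v, t) ∈ G.E})

/-- The `k`-degree time `d_x(v, G)`: the minimum timestamp `t ≥ x` such that `v`
has at least `k` neighbors in the detemporalized graph over `[x, t]`. -/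
def degTime (k : ℕ) (G : TemporalGraph V) (x : ℕ) (v : V) : ℕ∞ :=
  sInf ((fun t : ℕ => (t : ℕ∞)) '' {t | x ≤ t ∧ k ≤ ((detemp G x t).neighborSet v).ncard})

/-- The `k`-th smallest element of a multiset of values in `ℕ∞`
(`⊤` if the multiset has fewer than `k` elements). -/
def kthSmallest (m : Multiset ℕ∞) (k : ℕ) : ℕ∞ :=
  (m.sort (· ≤ ·)).getD (k - 1) ⊤

end


section Aux

open scoped Classical

variable {V : Type*}

lemma sInf_natCast_le_iff {S : Set ℕ} {t : ℕ} :
    sInf ((fun n : ℕ => (n : ℕ∞)) '' S) ≤ (t : ℕ∞) ↔ ∃ s ∈ S, s ≤ t := by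
  constructor
  · intro h
    by_contra hc
    push_neg at hc
    have h2 : ((t + 1 : ℕ) : ℕ∞) ≤ sInf ((fun n : ℕ => (n : ℕ∞)) '' S) := by
      apply le_sInf
      rintro a ⟨s, hs, rfl⟩
      show ((t + 1 : ℕ) : ℕ∞) ≤ (s : ℕ∞)
      exact Nat.cast_le.mpr (by have := hc s hs; omega)
    have h3 := h2.trans h
    exact absurd (Nat.cast_le.mp h3) (by omega)
  · rintro ⟨s, hs, hst⟩
    have hmem : ((s : ℕ∞)) ∈ (fun n : ℕ => (n : ℕ∞)) '' S := ⟨s, hs, rfl⟩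
    exact (sInf_le hmem).trans (Nat.cast_le.mpr hst)

lemma detemp_mono (G : TemporalGraph V) (x : ℕ) {t t' : ℕ} (h : t ≤ t') :
    detemp G x t ≤ detemp G x t' := by
  intro u w hw
  obtain ⟨s, h1, h2, h3⟩ : ∃ s, x ≤ s ∧ s ≤ t ∧ (u, w, s) ∈ G.E := hw
  exact ⟨s, h1, h2.trans h, h3⟩

lemma kDense_mono [Fintype V] {k : ℕ} {G G' : SimpleGraph V} (h : G ≤ G') {S : Set V}
    (hS : kDense k G S) : kDense k G' S := by
  intro w hw
  refine (hS w hw).trans (Set.ncard_le_ncard ?_ (Set.toFinite _))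
  rintro u ⟨h1, h2⟩
  exact ⟨h1, h h2⟩

lemma coreSet_mono [Fintype V] {k : ℕ} {G G' : SimpleGraph V} (h : G ≤ G') :
    coreSet k G ⊆ coreSet k G' := by
  intro w hw
  obtain ⟨S, hS, hwS⟩ := Set.mem_sUnion.mp hw
  exact Set.mem_sUnion.mpr ⟨S, kDense_mono h hS, hwS⟩

lemma coreSet_kDense [Fintype V] (k : ℕ) (G : SimpleGraph V) : kDense k G (coreSet k G) := by
  intro w hw
  obtain ⟨S, hS, hwS⟩ := Set.mem_sUnion.mp hw
  refine (hS w hwS).trans (Set.ncard_le_ncard ?_ (Set.toFinite _))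
  rintro u ⟨h1, h2⟩
  exact ⟨Set.mem_sUnion.mpr ⟨S, hS, h1⟩, h2⟩

lemma mem_coreSet_of_kle [Fintype V] {k : ℕ} {G : SimpleGraph V} {v : V}
    (h : k ≤ {u | u ∈ coreSet k G ∧ G.Adj v u}.ncard) : v ∈ coreSet k G := by
  refine Set.mem_sUnion.mpr ⟨insert v (coreSet k G), ?_, Set.mem_insert _ _⟩
  intro w hw
  have hsub : ∀ z : V, {u | u ∈ coreSet k G ∧ G.Adj z u}.ncard ≤
      {u | u ∈ insert v (coreSet k G) ∧ G.Adj z u}.ncard := fun z =>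
    Set.ncard_le_ncard (fun u ⟨h1, h2⟩ => ⟨Set.mem_insert_of_mem _ h1, h2⟩) (Set.toFinite _)
  rcases hw with rfl | hw
  · exact h.trans (hsub w)
  · exact (coreSet_kDense k G w hw).trans (hsub w)

lemma sorted_getD_le_of_countP {l : List ℕ∞} (hl : l.Pairwise (· ≤ ·)) {k : ℕ} (hk : 1 ≤ k)
    {t : ℕ∞} (h : k ≤ l.countP (fun a => decide (a ≤ t))) : l.getD (k - 1) ⊤ ≤ t := by
  have hlen : k ≤ l.length := h.trans List.countP_le_length
  have hk1 : k - 1 < l.length := by omega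
  rw [List.getD_eq_getElem l ⊤ hk1]
  by_contra hc
  push_neg at hc
  have hsplit : l = l.take (k - 1) ++ l.drop (k - 1) := (List.take_append_drop _ _).symm
  have hcount : l.countP (fun a => decide (a ≤ t)) =
      (l.take (k - 1)).countP (fun a => decide (a ≤ t)) +
      (l.drop (k - 1)).countP (fun a => decide (a ≤ t)) := by
    conv_lhs => rw [hsplit]
    exact List.countP_append
  have hdrop : (l.drop (k - 1)).countP (fun a => decide (a ≤ t)) = 0 := by
    rw [List.countP_eq_zero]
    intro a ha
    obtain ⟨j, hj, hja⟩ := List.mem_iff_getElem.mp ha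
    have hjl : k - 1 + j < l.length := by
      rw [List.length_drop] at hj; omega
    have hval : a = l[k - 1 + j] := by
      rw [← hja, List.getElem_drop]
    have hrel : l[k - 1] ≤ l[k - 1 + j] :=
      hl.rel_get_of_le (a := ⟨k - 1, hk1⟩) (b := ⟨k - 1 + j, hjl⟩)
        (Fin.mk_le_mk.mpr (by omega))
    simp only [decide_eq_true_eq]
    intro hle
    rw [hval] at hle
    exact absurd (hrel.trans hle) (not_le.mpr hc)
  have htake : (l.take (k - 1)).countP (fun a => decide (a ≤ t)) ≤ k - 1 :=
    List.countP_le_length.trans (by rw [List.length_take]; omega)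
  omega

lemma countP_le_of_sorted_getD {l : List ℕ∞} (hl : l.Pairwise (· ≤ ·)) {k : ℕ} (hk : 1 ≤ k)
    (hk1 : k - 1 < l.length) {t : ℕ∞} (h : l.getD (k - 1) ⊤ ≤ t) :
    k ≤ l.countP (fun a => decide (a ≤ t)) := by
  rw [List.getD_eq_getElem l ⊤ hk1] at h
  have hlen : k ≤ l.length := by omega
  have hsplit : l = l.take k ++ l.drop k := (List.take_append_drop _ _).symm
  have hcount : l.countP (fun a => decide (a ≤ t)) =
      (l.take k).countP (fun a => decide (a ≤ t)) +
      (l.drop k).countP (fun a => decide (a ≤ t)) := by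
    conv_lhs => rw [hsplit]
    exact List.countP_append
  have htake : (l.take k).countP (fun a => decide (a ≤ t)) = (l.take k).length := by
    rw [List.countP_eq_length]
    intro a ha
    obtain ⟨j, hj, hja⟩ := List.mem_iff_getElem.mp ha
    have hjk : j < k := by rw [List.length_take] at hj; omega
    have hjl : j < l.length := by omega
    have hval : a = l[j] := by rw [← hja, List.getElem_take]
    have hrel : l[j] ≤ l[k - 1] :=
      hl.rel_get_of_le (a := ⟨j, hjl⟩) (b := ⟨k - 1, hk1⟩) (Fin.mk_le_mk.mpr (by omega))
    simp only [decide_eq_true_eq]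
    rw [hval]
    exact hrel.trans h
  have hlt : (l.take k).length = k := by rw [List.length_take]; omega
  omega

end Aux

/-- The vertex `k`-core time `σ_x(v, G)` equals the `k`-th smallest
element of the multiset `{σ_x(u, v, G) : u adjacent to v in the detemporalized
graph of G}` (with value `⊤` when fewer than `k` elements are finite — which is
automatic since infinite elements of the multiset are `⊤` and missing elements
default to `⊤`). -/
theorem stmt5 {V : Type*} [Fintype V] (k : ℕ) (hk : 1 ≤ k)
    (G : TemporalGraph V) (x : ℕ) (v : V) :
    coreTime k G x v =
      kthSmallest
        (((detempAll G).neighborFinset v).val.map fun u => edgeCoreTime k G x u v) k := by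
  classical
  set s : Finset V := (detempAll G).neighborFinset v with hs
  set f : V → ℕ∞ := fun u => edgeCoreTime k G x u v with hf
  set m : Multiset ℕ∞ := s.val.map f with hm
  set l : List ℕ∞ := m.sort (· ≤ ·) with hlst
  have hlsort : l.Pairwise (· ≤ ·) := Multiset.pairwise_sort _ _
  have hml : (l : Multiset ℕ∞) = m := Multiset.sort_eq _ _
  have hkth : kthSmallest m k = l.getD (k - 1) ⊤ := rfl
  -- counting bridge
  have hbridge : ∀ t : ℕ∞,
      l.countP (fun a => decide (a ≤ t)) = (s.filter (fun u => f u ≤ t)).card := by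
    intro t
    have h1 : Multiset.countP (fun a => a ≤ t) m = l.countP (fun a => decide (a ≤ t)) := by
      rw [← hml]; rfl
    rw [← h1, hm, Multiset.countP_map]
    rfl
  apply le_antisymm
  · -- coreTime ≤ kthSmallest
    rcases eq_or_ne (kthSmallest m k) ⊤ with htop | hne
    · rw [htop]; exact le_top
    · obtain ⟨T, hT⟩ := WithTop.ne_top_iff_exists.mp hne
      rw [← hT]
      have hk1 : k - 1 < l.length := by
        by_contra hc
        push_neg at hc
        have hTtop : ((T : ℕ) : ℕ∞) = ⊤ :=
          hT.trans (by rw [hkth, List.getD_eq_default _ _ hc])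
        exact absurd hTtop (by simp)
      have hcount : k ≤ l.countP (fun a => decide (a ≤ (T : ℕ∞))) := by
        apply countP_le_of_sorted_getD hlsort hk hk1
        exact (hT.trans hkth).ge
      rw [hbridge] at hcount
      set F : Finset V := s.filter (fun u => f u ≤ (T : ℕ∞)) with hF
      have hmemF : ∀ u ∈ F, u ∈ tcoreV k G x T ∧ (detemp G x T).Adj v u ∧ x ≤ T := by
        intro u hu
        have hfu : f u ≤ (T : ℕ∞) := (Finset.mem_filter.mp hu).2
        rw [hf] at hfu
        simp only [edgeCoreTime] at hfu
        obtain ⟨t', ⟨hxt', hu', hv', hadj⟩, ht'T⟩ := sInf_natCast_le_iff.mp hfu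
        exact ⟨coreSet_mono (detemp_mono G x ht'T) hu',
          ((detemp_mono G x ht'T) hadj).symm, hxt'.trans ht'T⟩
      have hFne : F.Nonempty := Finset.card_pos.mp (lt_of_lt_of_le hk hcount)
      obtain ⟨u0, hu0⟩ := hFne
      have hxT : x ≤ T := (hmemF u0 hu0).2.2
      have hsubA : (F : Set V) ⊆ {u | u ∈ coreSet k (detemp G x T) ∧ (detemp G x T).Adj v u} := by
        intro u hu
        obtain ⟨h1, h2, _⟩ := hmemF u hu
        exact ⟨h1, h2⟩
      have hncard : k ≤ {u | u ∈ coreSet k (detemp G x T) ∧ (detemp G x T).Adj v u}.ncard := by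
        calc k ≤ F.card := hcount
        _ = (F : Set V).ncard := (Set.ncard_coe_finset F).symm
        _ ≤ _ := Set.ncard_le_ncard hsubA (Set.toFinite _)
      have hvcore : v ∈ tcoreV k G x T := mem_coreSet_of_kle hncard
      rw [coreTime]
      exact sInf_natCast_le_iff.mpr ⟨T, ⟨hxT, hvcore⟩, le_refl T⟩
  · -- kthSmallest ≤ coreTime
    rw [coreTime]
    apply le_sInf
    rintro a ⟨t, ⟨hxt, hv⟩, rfl⟩
    show kthSmallest m k ≤ (t : ℕ∞)
    have hdense : k ≤ {u | u ∈ coreSet k (detemp G x t) ∧ (detemp G x t).Adj v u}.ncard :=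
      coreSet_kDense k (detemp G x t) v hv
    have hsubF : {u | u ∈ coreSet k (detemp G x t) ∧ (detemp G x t).Adj v u} ⊆
        ↑(s.filter (fun u => f u ≤ (t : ℕ∞))) := by
      rintro u ⟨hu1, hu2⟩
      refine Finset.mem_coe.mpr (Finset.mem_filter.mpr ⟨?_, ?_⟩)
      · rw [hs, SimpleGraph.mem_neighborFinset]
        obtain ⟨t0, _, _, he⟩ : ∃ t0, x ≤ t0 ∧ t0 ≤ t ∧ (v, u, t0) ∈ G.E := hu2
        exact ⟨t0, he⟩
      · rw [hf]
        simp only [edgeCoreTime]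
        exact sInf_natCast_le_iff.mpr ⟨t, ⟨hxt, hu1, hv, hu2.symm⟩, le_refl t⟩
    have hcount : k ≤ l.countP (fun a => decide (a ≤ (t : ℕ∞))) := by
      rw [hbridge]
      calc k ≤ _ := hdense
      _ ≤ ((s.filter (fun u => f u ≤ (t : ℕ∞)) : Finset V) : Set V).ncard :=
        Set.ncard_le_ncard hsubF (Set.toFinite _)
      _ = _ := Set.ncard_coe_finset _
    rw [hkth]
    exact sorted_getD_le_of_countP hlsort hk hcount
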